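/- Fix α ∈ (0,1), θ > 0 and an integer n ≥ 1. Let G be a random variable with the Gamma(θ/α) distribution and let E₁,…,E_n be Exp(1) random variables, with G, E₁,…,E_n independent; set G̃₀ = 0 and G̃_k = E₁ + ⋯ + E_k, and define R_k = ((G + G̃_{k-1})/(G + G̃_k))^{1/α} for k = 1,…,n. Then R₁,…,R_n are independent and R_k has the Beta(θ + (k-1)α, 1) distribution for each k; equivalently, the joint law of (R₁,…,R_n) has Lebesgue density (r₁,…,r_n) ↦ ∏_{k=1}^n (θ + (k-1)α) r_k^{θ + (k-1)α - 1} on (0,1)^n. -/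

import Mathlib

open MeasureTheory Set
open scoped ENNReal

/-- The Exp(1) distribution, with density `e^{-t}` on `(0,∞)`. -/
noncomputable def expM : Measure ℝ :=
  volume.withDensity ((Set.Ioi (0 : ℝ)).indicator fun t => ENNReal.ofReal (Real.exp (-t)))

/-- The Gamma(a) distribution (rate 1), with density `t^{a-1} e^{-t}/Γ(a)` on `(0,∞)`. -/
noncomputable def gammaM (a : ℝ) : Measure ℝ :=
  volume.withDensity ((Set.Ioi (0 : ℝ)).indicator fun t =>
    ENNReal.ofReal (t ^ (a - 1) * Real.exp (-t) / Real.Gamma a))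

/-- The Beta(b,1) distribution, with density `b r^{b-1}` on `(0,1)`. -/
noncomputable def betaM (b : ℝ) : Measure ℝ :=
  volume.withDensity ((Set.Ioo (0 : ℝ) 1).indicator fun r => ENNReal.ofReal (b * r ^ (b - 1)))

lemma indicator_ne_top {s : Set ℝ} {g : ℝ → ℝ} (x : ℝ) :
    s.indicator (fun t => ENNReal.ofReal (g t)) x ≠ ⊤ := by
  classical
  rw [Set.indicator_apply]; split_ifs <;> simp

instance : SigmaFinite expM := SigmaFinite.withDensity_of_ne_top' fun x => indicator_ne_top x
instance (a : ℝ) : SigmaFinite (gammaM a) :=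
  SigmaFinite.withDensity_of_ne_top' fun x => indicator_ne_top x
instance (b : ℝ) : SigmaFinite (betaM b) :=
  SigmaFinite.withDensity_of_ne_top' fun x => indicator_ne_top x

lemma measurable_expD :
    Measurable ((Set.Ioi (0 : ℝ)).indicator fun t => ENNReal.ofReal (Real.exp (-t))) := by
  fun_prop (disch := measurability)

lemma measurable_gammaD (a : ℝ) : Measurable ((Set.Ioi (0 : ℝ)).indicator fun t =>
    ENNReal.ofReal (t ^ (a - 1) * Real.exp (-t) / Real.Gamma a)) := by
  fun_prop (disch := measurability)

lemma measurable_betaD (b : ℝ) :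
    Measurable ((Set.Ioo (0 : ℝ) 1).indicator fun r => ENNReal.ofReal (b * r ^ (b - 1))) := by
  fun_prop (disch := measurability)

instance : IsProbabilityMeasure expM := by
  constructor
  rw [expM, withDensity_apply _ MeasurableSet.univ, Measure.restrict_univ]
  rw [show ∫⁻ x, (Set.Ioi (0:ℝ)).indicator (fun t => ENNReal.ofReal (Real.exp (-t))) x
      = ∫⁻ x, ProbabilityTheory.exponentialPDF 1 x from ?_]
  · exact ProbabilityTheory.lintegral_exponentialPDF_eq_one one_pos
  · refine lintegral_congr_ae ?_
    have h0 : (volume : Measure ℝ) {0} = 0 := Real.volume_singleton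
    filter_upwards [measure_eq_zero_iff_ae_notMem.mp h0] with x hx
    rcases lt_trichotomy x 0 with h | h | h
    · rw [Set.indicator_of_notMem (by simpa using h.le.not_gt),
        ProbabilityTheory.exponentialPDF_of_neg h]
    · exact absurd h hx
    · rw [Set.indicator_of_mem (Set.mem_Ioi.mpr h), ProbabilityTheory.exponentialPDF_of_nonneg h.le]
      norm_num

lemma isProbGamma {a : ℝ} (ha : 0 < a) : IsProbabilityMeasure (gammaM a) := by
  constructor
  rw [gammaM, withDensity_apply _ MeasurableSet.univ, Measure.restrict_univ]
  rw [show ∫⁻ x, (Set.Ioi (0:ℝ)).indicator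
        (fun t => ENNReal.ofReal (t ^ (a-1) * Real.exp (-t) / Real.Gamma a)) x
      = ∫⁻ x, ProbabilityTheory.gammaPDF a 1 x from ?_]
  · exact ProbabilityTheory.lintegral_gammaPDF_eq_one ha one_pos
  · refine lintegral_congr_ae ?_
    have h0 : (volume : Measure ℝ) {0} = 0 := Real.volume_singleton
    filter_upwards [measure_eq_zero_iff_ae_notMem.mp h0] with x hx
    rcases lt_trichotomy x 0 with h | h | h
    · rw [Set.indicator_of_notMem (by simpa using h.le.not_gt),
        ProbabilityTheory.gammaPDF_of_neg h]
    · exact absurd h hx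
    · rw [Set.indicator_of_mem (Set.mem_Ioi.mpr h), ProbabilityTheory.gammaPDF_of_nonneg h.le]
      rw [Real.one_rpow]
      ring_nf

section key
variable {α a : ℝ}

lemma image_psi (hα : 0 < α) {s : ℝ} (hs : 0 < s) :
    (fun u : ℝ => u ^ α * s) '' Ioo 0 1 = Ioo 0 s := by
  ext x
  constructor
  · rintro ⟨u, ⟨hu0, hu1⟩, rfl⟩
    refine ⟨mul_pos (Real.rpow_pos_of_pos hu0 α) hs, ?_⟩
    show u ^ α * s < s
    nlinarith [Real.rpow_lt_one hu0.le hu1 hα, Real.rpow_pos_of_pos hu0 α]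
  · rintro ⟨hx0, hxs⟩
    refine ⟨(x / s) ^ α⁻¹, ⟨Real.rpow_pos_of_pos (div_pos hx0 hs) _,
      Real.rpow_lt_one (div_pos hx0 hs).le ((div_lt_one hs).mpr hxs) (by positivity)⟩, ?_⟩
    show ((x / s) ^ α⁻¹) ^ α * s = x
    rw [Real.rpow_inv_rpow (div_pos hx0 hs).le (ne_of_gt hα)]
    field_simp

lemma inj_psi (hα : 0 < α) {s : ℝ} (hs : 0 < s) :
    InjOn (fun u : ℝ => u ^ α * s) (Ioo 0 1) := by
  intro u1 h1 u2 h2 heq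
  have h : u1 ^ α = u2 ^ α := by
    exact mul_right_cancel₀ (ne_of_gt hs) heq
  have := congrArg (fun t : ℝ => t ^ α⁻¹) h
  simpa [Real.rpow_rpow_inv h1.1.le (ne_of_gt hα),
    Real.rpow_rpow_inv h2.1.le (ne_of_gt hα)] using this

lemma lintegral_image_eq_lintegral_abs_deriv_mul' {s : Set ℝ} {f f' : ℝ → ℝ}
    (hs : MeasurableSet s) (hf' : ∀ x ∈ s, HasDerivWithinAt f (f' x) s x) (hf : InjOn f s)
    (g : ℝ → ℝ≥0∞) :
    ∫⁻ x in f '' s, g x = ∫⁻ x in s, ENNReal.ofReal |f' x| * g (f x) := by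
  simpa only [ContinuousLinearMap.det_toSpanSingleton] using
    lintegral_image_eq_lintegral_abs_det_fderiv_mul volume hs
      (fun x hx => (hf' x hx).hasFDerivWithinAt) hf g

/-- the inner one-dimensional step -/
lemma inner_step (hα : 0 < α) (ha : 0 < a) (f : ℝ × ℝ → ℝ≥0∞) (s : ℝ) :
    ∫⁻ x, ((Ioi (0:ℝ)).indicator (fun t => ENNReal.ofReal (t ^ (a-1) * Real.exp (-t) / Real.Gamma a)) x)
        * (((Ioi (0:ℝ)).indicator (fun t => ENNReal.ofReal (Real.exp (-t))) (s - x))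
        * f ((x / s) ^ (1/α), s))
      = ((Ioi (0:ℝ)).indicator (fun t => ENNReal.ofReal (t ^ (a+1-1) * Real.exp (-t) / Real.Gamma (a+1))) s)
        * ∫⁻ u, ((Ioo (0:ℝ) 1).indicator (fun r => ENNReal.ofReal (a*α * r ^ (a*α - 1))) u) * f (u, s) := by
  have hΓ : (0:ℝ) < Real.Gamma a := Real.Gamma_pos_of_pos ha
  rcases le_or_gt s 0 with hs | hs
  · rw [Set.indicator_of_notMem (by simpa using hs), zero_mul]
    rw [← lintegral_zero]
    refine lintegral_congr fun x => ?_
    rcases le_or_gt x 0 with hx | hx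
    · rw [Set.indicator_of_notMem (by simpa using hx), zero_mul]
    · rw [Set.indicator_of_notMem (show (s-x) ∉ Ioi (0:ℝ) by simp; linarith), zero_mul, mul_zero]
  · -- s > 0
    have hΓ1 : Real.Gamma (a+1) = a * Real.Gamma a := Real.Gamma_add_one (ne_of_gt ha)
    have stepA : ∀ x : ℝ,
        ((Ioi (0:ℝ)).indicator (fun t => ENNReal.ofReal (t ^ (a-1) * Real.exp (-t) / Real.Gamma a)) x)
          * (((Ioi (0:ℝ)).indicator (fun t => ENNReal.ofReal (Real.exp (-t))) (s - x))
          * f ((x / s) ^ (1/α), s))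
        = (Ioo (0:ℝ) s).indicator
            (fun x => ENNReal.ofReal (x ^ (a-1) * Real.exp (-s) / Real.Gamma a)
              * f ((x / s) ^ (1/α), s)) x := by
      intro x
      by_cases hx : x ∈ Ioo (0:ℝ) s
      · obtain ⟨hx1, hx2⟩ := hx
        rw [Set.indicator_of_mem (show x ∈ Ioo (0:ℝ) s from ⟨hx1, hx2⟩),
          Set.indicator_of_mem (Set.mem_Ioi.mpr hx1),
          Set.indicator_of_mem (show (s-x) ∈ Ioi (0:ℝ) from Set.mem_Ioi.mpr (by linarith))]
        rw [← mul_assoc, ← ENNReal.ofReal_mul (by positivity)]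
        congr 2
        rw [show (-s) = (-x) + (-(s-x)) by ring, Real.exp_add]
        ring
      · rw [Set.indicator_of_notMem hx]
        rcases le_or_gt x 0 with h | h
        · rw [Set.indicator_of_notMem (by simpa using h), zero_mul]
        · have hxs : s ≤ x := by
            by_contra hc
            exact hx ⟨h, lt_of_not_ge hc⟩
          rw [Set.indicator_of_notMem (show (s-x) ∉ Ioi (0:ℝ) by simp; linarith), zero_mul, mul_zero]
    rw [lintegral_congr stepA, lintegral_indicator measurableSet_Ioo]
    rw [← image_psi hα hs]
    rw [lintegral_image_eq_lintegral_abs_deriv_mul' (f' := fun u => α * u ^ (α - 1) * s)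
      measurableSet_Ioo
      (fun u hu => ((Real.hasDerivAt_rpow_const (Or.inl (ne_of_gt hu.1))).mul_const s).hasDerivWithinAt)
      (inj_psi hα hs)]
    have stepE : ∀ u ∈ Ioo (0:ℝ) 1,
        ENNReal.ofReal |α * u ^ (α - 1) * s|
          * (ENNReal.ofReal ((u ^ α * s) ^ (a-1) * Real.exp (-s) / Real.Gamma a)
            * f (((u ^ α * s) / s) ^ (1/α), s))
        = ENNReal.ofReal (s ^ (a+1-1) * Real.exp (-s) / Real.Gamma (a+1))
          * (ENNReal.ofReal (a*α * u ^ (a*α - 1)) * f (u, s)) := by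
      intro u hu
      have hu0 : (0:ℝ) < u := hu.1
      have harg : ((u ^ α * s) / s) ^ (1/α) = u := by
        rw [mul_div_cancel_right₀ _ (ne_of_gt hs), one_div,
          Real.rpow_rpow_inv hu0.le (ne_of_gt hα)]
      have hreal : |α * u ^ (α - 1) * s| * ((u ^ α * s) ^ (a-1) * Real.exp (-s) / Real.Gamma a)
          = (s ^ (a+1-1) * Real.exp (-s) / Real.Gamma (a+1)) * (a*α * u ^ (a*α - 1)) := by
        have h1 : |α * u ^ (α - 1) * s| = α * u ^ (α - 1) * s := by
          rw [abs_of_pos]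
          positivity
        have h2 : (u ^ α * s) ^ (a-1) = u ^ (α * (a-1)) * s ^ (a-1) := by
          rw [Real.mul_rpow (Real.rpow_nonneg hu0.le α) hs.le, Real.rpow_mul hu0.le]
        have h3 : u ^ (α - 1) * u ^ (α * (a-1)) = u ^ (a*α - 1) := by
          rw [← Real.rpow_add hu0]; ring_nf
        have h4 : s * s ^ (a-1) = s ^ (a+1-1) := by
          rw [show (a+1-1 : ℝ) = 1 + (a-1) by ring, Real.rpow_add hs, Real.rpow_one]
        rw [h1, h2, hΓ1, ← h3, ← h4]
        field_simp
      rw [harg, ← mul_assoc, ← ENNReal.ofReal_mul (abs_nonneg _), hreal,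
        ENNReal.ofReal_mul (by positivity), mul_assoc]
    rw [setLIntegral_congr_fun measurableSet_Ioo stepE]
    rw [lintegral_const_mul' _ _ ENNReal.ofReal_ne_top,
      Set.indicator_of_mem (Set.mem_Ioi.mpr hs)]
    congr 1
    rw [← lintegral_indicator measurableSet_Ioo]
    refine lintegral_congr fun u => ?_
    rw [Set.indicator_mul_left]

lemma measurable_phi (α : ℝ) :
    Measurable (fun p : ℝ × ℝ => (((p.1 / (p.1 + p.2)) ^ (1/α) : ℝ), p.1 + p.2)) := by
  fun_prop

lemma key2D_lintegral (hα : 0 < α) (ha : 0 < a) (f : ℝ × ℝ → ℝ≥0∞) (hf : Measurable f) :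
    ∫⁻ p : ℝ × ℝ, f ((p.1 / (p.1 + p.2)) ^ (1/α), p.1 + p.2) ∂((gammaM a).prod expM)
      = ∫⁻ p, f p ∂((betaM (a*α)).prod (gammaM (a+1))) := by
  have hφ := measurable_phi α
  calc ∫⁻ p : ℝ × ℝ, f ((p.1 / (p.1 + p.2)) ^ (1/α), p.1 + p.2) ∂((gammaM a).prod expM)
      = ∫⁻ x, ∫⁻ e, f ((x / (x + e)) ^ (1/α), x + e) ∂expM ∂(gammaM a) :=
        lintegral_prod _ ((hf.comp hφ).aemeasurable)
    _ = ∫⁻ x, ((Ioi (0:ℝ)).indicator (fun t => ENNReal.ofReal (t ^ (a-1) * Real.exp (-t) / Real.Gamma a)) x)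
          * ∫⁻ e, f ((x / (x + e)) ^ (1/α), x + e) ∂expM ∂volume := by
        have hm1 : Measurable fun x : ℝ => ∫⁻ e, f ((x / (x + e)) ^ (1/α), x + e) ∂expM :=
          Measurable.lintegral_prod_right' (hf.comp' hφ)
        rw [gammaM, lintegral_withDensity_eq_lintegral_mul _ (measurable_gammaD a) hm1]
        simp only [Pi.mul_apply]
    _ = ∫⁻ x, ((Ioi (0:ℝ)).indicator (fun t => ENNReal.ofReal (t ^ (a-1) * Real.exp (-t) / Real.Gamma a)) x)
          * ∫⁻ s, ((Ioi (0:ℝ)).indicator (fun t => ENNReal.ofReal (Real.exp (-t))) (s - x))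
              * f ((x / s) ^ (1/α), s) ∂volume ∂volume := by
        refine lintegral_congr fun x => ?_
        congr 1
        have hm2 : Measurable fun e : ℝ => f ((x / (x + e)) ^ (1/α), x + e) :=
          hf.comp' (by fun_prop : Measurable fun e : ℝ => (((x / (x + e)) ^ (1/α) : ℝ), x + e))
        rw [expM, lintegral_withDensity_eq_lintegral_mul _ measurable_expD hm2]
        simp only [Pi.mul_apply]
        rw [← lintegral_add_right_eq_self
          (fun s => ((Ioi (0:ℝ)).indicator (fun t => ENNReal.ofReal (Real.exp (-t))) (s - x))
              * f ((x / s) ^ (1/α), s)) x]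
        refine lintegral_congr fun e => ?_
        rw [add_sub_cancel_right, add_comm e x]
    _ = ∫⁻ x, ∫⁻ s, ((Ioi (0:ℝ)).indicator (fun t => ENNReal.ofReal (t ^ (a-1) * Real.exp (-t) / Real.Gamma a)) x)
          * (((Ioi (0:ℝ)).indicator (fun t => ENNReal.ofReal (Real.exp (-t))) (s - x))
              * f ((x / s) ^ (1/α), s)) ∂volume ∂volume := by
        refine lintegral_congr fun x => ?_
        exact (lintegral_const_mul' _ _ (indicator_ne_top x)).symm
    _ = ∫⁻ s, ∫⁻ x, ((Ioi (0:ℝ)).indicator (fun t => ENNReal.ofReal (t ^ (a-1) * Real.exp (-t) / Real.Gamma a)) x)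
          * (((Ioi (0:ℝ)).indicator (fun t => ENNReal.ofReal (Real.exp (-t))) (s - x))
              * f ((x / s) ^ (1/α), s)) ∂volume ∂volume := by
        refine lintegral_lintegral_swap ?_
        rw [Function.uncurry_def]
        fun_prop (disch := measurability)
    _ = ∫⁻ s, ((Ioi (0:ℝ)).indicator (fun t => ENNReal.ofReal (t ^ (a+1-1) * Real.exp (-t) / Real.Gamma (a+1))) s)
          * ∫⁻ u, ((Ioo (0:ℝ) 1).indicator (fun r => ENNReal.ofReal (a*α * r ^ (a*α - 1))) u)
              * f (u, s) ∂volume ∂volume :=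
        lintegral_congr fun s => inner_step hα ha f s
    _ = ∫⁻ s, ((Ioi (0:ℝ)).indicator (fun t => ENNReal.ofReal (t ^ (a+1-1) * Real.exp (-t) / Real.Gamma (a+1))) s)
          * ∫⁻ u, f (u, s) ∂(betaM (a*α)) ∂volume := by
        refine lintegral_congr fun s => ?_
        congr 1
        have hm3 : Measurable fun u : ℝ => f (u, s) :=
          hf.comp' (by fun_prop : Measurable fun u : ℝ => (u, s))
        rw [betaM, lintegral_withDensity_eq_lintegral_mul _ (measurable_betaD _) hm3]
        simp only [Pi.mul_apply]
    _ = ∫⁻ s, ∫⁻ u, f (u, s) ∂(betaM (a*α)) ∂(gammaM (a+1)) := by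
        have hm4 : Measurable fun s : ℝ => ∫⁻ u, f (u, s) ∂(betaM (a*α)) :=
          Measurable.lintegral_prod_right'
            (hf.comp' (by fun_prop : Measurable fun p : ℝ × ℝ => (p.2, p.1)))
        rw [gammaM, lintegral_withDensity_eq_lintegral_mul _ (measurable_gammaD _) hm4]
        simp only [Pi.mul_apply]
    _ = ∫⁻ p, f p ∂((betaM (a*α)).prod (gammaM (a+1))) :=
        (lintegral_prod_symm f hf.aemeasurable).symm

lemma key2D (hα : 0 < α) (ha : 0 < a) :
    Measure.map (fun p : ℝ × ℝ => (((p.1 / (p.1 + p.2)) ^ (1/α) : ℝ), p.1 + p.2))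
        ((gammaM a).prod expM) = (betaM (a*α)).prod (gammaM (a+1)) := by
  refine Measure.ext fun S hS => ?_
  rw [Measure.map_apply (measurable_phi α) hS, ← lintegral_indicator_one hS,
    ← key2D_lintegral hα ha (S.indicator 1) (measurable_one.indicator hS),
    ← lintegral_indicator_one ((measurable_phi α) hS)]
  refine lintegral_congr fun p => ?_
  by_cases h : p ∈ (fun p : ℝ × ℝ => (((p.1 / (p.1 + p.2)) ^ (1/α) : ℝ), p.1 + p.2)) ⁻¹' S
  · rw [Set.indicator_of_mem h, Set.indicator_of_mem (Set.mem_preimage.mp h)]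
    rfl
  · rw [Set.indicator_of_notMem h,
      Set.indicator_of_notMem (fun hc => h (Set.mem_preimage.mpr hc))]
end key

lemma piFinSuccAbove_symm_cons {n : ℕ} (x : ℝ) (p : Fin n → ℝ) :
    (MeasurableEquiv.piFinSuccAbove (fun _ : Fin (n+1) => ℝ) 0).symm (x, p) = Fin.cons x p := by
  ext k
  induction k using Fin.cases <;>
    simp [MeasurableEquiv.piFinSuccAbove, Fin.insertNthEquiv]

lemma withDensity_prod {β γ : Type*} [MeasurableSpace β] [MeasurableSpace γ]
    (μ : Measure β) (ν : Measure γ) [SigmaFinite μ] [SigmaFinite ν]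
    {f : β → ℝ≥0∞} {g : γ → ℝ≥0∞} (hf : Measurable f) (hg : Measurable g)
    (hf' : ∀ x, f x ≠ ⊤) (hg' : ∀ y, g y ≠ ⊤) :
    (μ.withDensity f).prod (ν.withDensity g)
      = (μ.prod ν).withDensity (fun p => f p.1 * g p.2) := by
  haveI i1 : SigmaFinite (μ.withDensity f) := SigmaFinite.withDensity_of_ne_top' hf'
  haveI i2 : SigmaFinite (ν.withDensity g) := SigmaFinite.withDensity_of_ne_top' hg'
  refine Measure.prod_eq fun s t hs ht => ?_
  rw [withDensity_apply _ (hs.prod ht), ← Measure.prod_restrict,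
    lintegral_prod_mul hf.aemeasurable hg.aemeasurable,
    ← withDensity_apply _ hs, ← withDensity_apply _ ht]

lemma map_withDensity_equiv {β γ : Type*} [MeasurableSpace β] [MeasurableSpace γ] (e : β ≃ᵐ γ)
    (μ : Measure β) {f : γ → ℝ≥0∞} (hf : Measurable f) :
    Measure.map e (μ.withDensity (fun x => f (e x))) = (Measure.map e μ).withDensity f := by
  refine Measure.ext fun S hS => ?_
  rw [Measure.map_apply e.measurable hS, withDensity_apply _ hS,
    withDensity_apply _ (e.measurable hS), setLIntegral_map hS hf e.measurable]

lemma pi_withDensity (n : ℕ) (f : Fin n → ℝ → ℝ≥0∞) (hf : ∀ k, Measurable (f k))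
    (hf' : ∀ k x, f k x ≠ ⊤) :
    Measure.pi (fun k => (volume : Measure ℝ).withDensity (f k))
      = (Measure.pi fun _ : Fin n => (volume : Measure ℝ)).withDensity
          (fun x => ∏ k, f k (x k)) := by
  induction n with
  | zero =>
    rw [show (fun x : Fin 0 → ℝ => ∏ k, f k (x k)) = 1 by funext x; simp,
      withDensity_one, Measure.pi_of_empty, Measure.pi_of_empty]
  | succ n ih =>
    haveI : ∀ i : Fin (n+1), SigmaFinite ((fun k => (volume : Measure ℝ).withDensity (f k)) i) :=
      fun k => SigmaFinite.withDensity_of_ne_top' (hf' k)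
    have hprod : Measurable fun x : Fin n → ℝ => ∏ j, f j.succ (x j) :=
      Finset.measurable_prod _ (fun j _ => (hf j.succ).comp (measurable_pi_apply j))
    have hprod1 : Measurable fun x : Fin (n+1) → ℝ => ∏ k, f k (x k) :=
      Finset.measurable_prod _ (fun k _ => (hf k).comp (measurable_pi_apply k))
    set e := MeasurableEquiv.piFinSuccAbove (fun _ : Fin (n+1) => ℝ) 0 with he
    rw [← ((measurePreserving_piFinSuccAbove
      (fun k : Fin (n+1) => (volume : Measure ℝ).withDensity (f k)) 0).symm e).map_eq]
    rw [show (Measure.pi fun j : Fin n =>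
        (volume : Measure ℝ).withDensity (f ((0 : Fin (n+1)).succAbove j)))
      = Measure.pi (fun j : Fin n => (volume : Measure ℝ).withDensity (f j.succ)) from rfl]
    rw [ih (fun j => f j.succ) (fun j => hf _) (fun j x => hf' _ x)]
    rw [withDensity_prod _ _ (hf 0) hprod
      (fun x => hf' 0 x) (fun y => ENNReal.prod_ne_top fun j _ => hf' j.succ (y j))]
    have key : (fun p : ℝ × (Fin n → ℝ) => f 0 p.1 * ∏ j, f j.succ (p.2 j))
        = fun p : ℝ × (Fin n → ℝ) => (∏ k, f k ((e.symm p) k)) := by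
      funext p
      rw [show e.symm p = Fin.cons p.1 p.2 from piFinSuccAbove_symm_cons p.1 p.2,
        Fin.prod_univ_succ]
      simp
    rw [key, map_withDensity_equiv e.symm _ hprod1,
      ((measurePreserving_piFinSuccAbove (fun _ : Fin (n+1) => (volume : Measure ℝ)) 0).symm e).map_eq]

lemma sum_Iio_zero {m : ℕ} (g : Fin (m+1) → ℝ) :
    ∑ i ∈ Finset.Iio (0 : Fin (m+1)), g i = 0 :=
  Finset.sum_eq_zero fun i hi => absurd (Finset.mem_Iio.mp hi) (Fin.not_lt_zero i)

lemma sum_Iic_zero {m : ℕ} (g : Fin (m+1) → ℝ) :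
    ∑ i ∈ Finset.Iic (0 : Fin (m+1)), g i = g 0 := by
  rw [show Finset.Iic (0 : Fin (m+1)) = {0} by ext i; simp [Fin.le_zero_iff],
    Finset.sum_singleton]

lemma sum_Iio_filter {m : ℕ} (k : Fin m) (g : Fin m → ℝ) :
    ∑ i ∈ Finset.Iio k, g i = ∑ i, if i < k then g i else 0 := by
  rw [show Finset.Iio k = Finset.univ.filter (· < k) by ext i; simp, Finset.sum_filter]

lemma sum_Iic_filter {m : ℕ} (k : Fin m) (g : Fin m → ℝ) :
    ∑ i ∈ Finset.Iic k, g i = ∑ i, if i ≤ k then g i else 0 := by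
  rw [show Finset.Iic k = Finset.univ.filter (· ≤ k) by ext i; simp, Finset.sum_filter]

lemma sum_Iio_succ_cons {n : ℕ} (e0 : ℝ) (e' : Fin n → ℝ) (j : Fin n) :
    ∑ i ∈ Finset.Iio j.succ, Fin.cons e0 e' i = e0 + ∑ i ∈ Finset.Iio j, e' i := by
  rw [sum_Iio_filter, sum_Iio_filter, Fin.sum_univ_succ]
  simp [Fin.succ_lt_succ_iff, Fin.succ_pos]

lemma sum_Iic_succ_cons {n : ℕ} (e0 : ℝ) (e' : Fin n → ℝ) (j : Fin n) :
    ∑ i ∈ Finset.Iic j.succ, Fin.cons e0 e' i = e0 + ∑ i ∈ Finset.Iic j, e' i := by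
  rw [sum_Iic_filter, sum_Iic_filter, Fin.sum_univ_succ]
  simp [Fin.succ_le_succ_iff, Fin.zero_le]

/-- The map taking `(G, (E₁,…,E_n))` to `(R₁,…,R_n)`. -/
noncomputable def Fmap (α : ℝ) (n : ℕ) : ℝ × (Fin n → ℝ) → (Fin n → ℝ) := fun p => fun k : Fin n =>
  ((p.1 + ∑ i ∈ Finset.Iio k, p.2 i) / (p.1 + ∑ i ∈ Finset.Iic k, p.2 i)) ^ (1 / α)

lemma measurable_Fmap (α : ℝ) (n : ℕ) : Measurable (Fmap α n) := by
  unfold Fmap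
  fun_prop

lemma Fmap_cons (α : ℝ) {n : ℕ} (g e0 : ℝ) (e' : Fin n → ℝ) :
    Fmap α (n+1) (g, Fin.cons e0 e')
      = Fin.cons ((g / (g + e0)) ^ (1/α)) (Fmap α n (g + e0, e')) := by
  funext k
  induction k using Fin.cases with
  | zero => simp [Fmap, sum_Iio_zero, sum_Iic_zero]
  | succ j =>
    simp only [Fmap, Fin.cons_succ, sum_Iio_succ_cons, sum_Iic_succ_cons]
    rw [← add_assoc, ← add_assoc]

lemma map_cons {n : ℕ} (m : Fin (n+1) → Measure ℝ) [∀ i, SigmaFinite (m i)] :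
    Measure.map (fun q : ℝ × (Fin n → ℝ) => Fin.cons q.1 q.2)
        ((m 0).prod (Measure.pi fun j : Fin n => m j.succ)) = Measure.pi m := by
  have h := ((measurePreserving_piFinSuccAbove m 0).symm
    (MeasurableEquiv.piFinSuccAbove (fun _ : Fin (n+1) => ℝ) 0)).map_eq
  rw [show (fun q : ℝ × (Fin n → ℝ) => Fin.cons q.1 q.2)
      = ⇑(MeasurableEquiv.piFinSuccAbove (fun _ : Fin (n+1) => ℝ) 0).symm from
    funext fun q => (piFinSuccAbove_symm_cons q.1 q.2).symm]
  exact h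

lemma main_ind {α : ℝ} (hα : 0 < α) :
    ∀ (n : ℕ) (a : ℝ), 0 < a →
      Measure.map (Fmap α n) ((gammaM a).prod (Measure.pi fun _ : Fin n => expM))
        = Measure.pi (fun k : Fin n => betaM ((a + (k : ℕ)) * α)) := by
  intro n
  induction n with
  | zero =>
    intro a ha
    haveI := isProbGamma ha
    refine Measure.ext fun S hS => ?_
    rw [Measure.map_apply (measurable_Fmap α 0) hS]
    rcases S.eq_empty_or_nonempty with rfl | hne
    · simp
    · have hSu : S = univ := hne.eq_univ
      rw [hSu, Set.preimage_univ, measure_univ, Measure.pi_of_empty]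
      simp
  | succ n ih =>
    intro a ha
    set consF : ℝ × (Fin n → ℝ) → (Fin (n+1) → ℝ) := fun q => (Fin.cons q.1 q.2 : Fin (n+1) → ℝ) with hconsF
    have hconsFm : Measurable consF := by
      refine measurable_pi_lambda _ fun k => ?_
      induction k using Fin.cases with
      | zero => simpa [hconsF] using measurable_fst
      | succ j => simpa [hconsF, Function.comp_def] using (measurable_pi_apply j).comp measurable_snd
    have hφ : Measurable (fun p : ℝ × ℝ => (((p.1 / (p.1 + p.2)) ^ (1/α) : ℝ), p.1 + p.2)) := by
      fun_prop
    rw [show (Measure.pi fun _ : Fin (n+1) => expM)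
        = Measure.map consF (expM.prod (Measure.pi fun _ : Fin n => expM)) from
      (map_cons (n := n) (fun _ => expM)).symm]
    rw [show (gammaM a).prod (Measure.map consF (expM.prod (Measure.pi fun _ : Fin n => expM)))
        = Measure.map (Prod.map id consF)
            ((gammaM a).prod (expM.prod (Measure.pi fun _ : Fin n => expM))) from by
      rw [← Measure.map_prod_map _ _ measurable_id hconsFm, Measure.map_id]]
    rw [Measure.map_map (measurable_Fmap α (n+1)) (measurable_id.prodMap hconsFm)]
    have hcomp1 : (Fmap α (n+1)) ∘ (Prod.map id consF)
        = (fun p : ℝ × (ℝ × (Fin n → ℝ)) =>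
            (Fin.cons ((p.1 / (p.1 + p.2.1)) ^ (1/α)) (Fmap α n (p.1 + p.2.1, p.2.2)) : Fin (n+1) → ℝ)) := by
      funext p
      exact Fmap_cons α p.1 p.2.1 p.2.2
    rw [hcomp1]
    rw [← (measurePreserving_prodAssoc (gammaM a) expM (Measure.pi fun _ : Fin n => expM)).map_eq]
    have hψm : Measurable (fun p : ℝ × (ℝ × (Fin n → ℝ)) =>
        (Fin.cons ((p.1 / (p.1 + p.2.1)) ^ (1/α)) (Fmap α n (p.1 + p.2.1, p.2.2)) : Fin (n+1) → ℝ)) := by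
      refine measurable_pi_lambda _ fun k => ?_
      induction k using Fin.cases with
      | zero => simp only [Fin.cons_zero]; fun_prop
      | succ j =>
        simp only [Fin.cons_succ]
        exact (measurable_pi_apply j).comp
          ((measurable_Fmap α n).comp ((measurable_fst.add (measurable_fst.comp measurable_snd)).prodMk
            (measurable_snd.comp measurable_snd)))
    rw [Measure.map_map hψm MeasurableEquiv.prodAssoc.measurable]
    have hcomp2 : ((fun p : ℝ × (ℝ × (Fin n → ℝ)) =>
          (Fin.cons ((p.1 / (p.1 + p.2.1)) ^ (1/α)) (Fmap α n (p.1 + p.2.1, p.2.2)) : Fin (n+1) → ℝ))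
        ∘ ⇑(MeasurableEquiv.prodAssoc : (ℝ × ℝ) × (Fin n → ℝ) ≃ᵐ ℝ × ℝ × (Fin n → ℝ)))
        = (fun q : (ℝ × ℝ) × (Fin n → ℝ) => (Fin.cons q.1.1 (Fmap α n (q.1.2, q.2)) : Fin (n+1) → ℝ))
          ∘ (Prod.map (fun p : ℝ × ℝ => (((p.1 / (p.1 + p.2)) ^ (1/α) : ℝ), p.1 + p.2)) id) := rfl
    rw [hcomp2]
    have hψ2m : Measurable (fun q : (ℝ × ℝ) × (Fin n → ℝ) => (Fin.cons q.1.1 (Fmap α n (q.1.2, q.2)) : Fin (n+1) → ℝ)) := by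
      refine measurable_pi_lambda _ fun k => ?_
      induction k using Fin.cases with
      | zero => simpa using measurable_fst.fst
      | succ j =>
        simp only [Fin.cons_succ]
        exact (measurable_pi_apply j).comp
          ((measurable_Fmap α n).comp ((measurable_snd.comp measurable_fst).prodMk measurable_snd))
    rw [← Measure.map_map hψ2m (hφ.prodMap measurable_id)]
    rw [← Measure.map_prod_map _ _ hφ measurable_id, Measure.map_id, key2D hα ha]
    rw [show (fun q : (ℝ × ℝ) × (Fin n → ℝ) => (Fin.cons q.1.1 (Fmap α n (q.1.2, q.2)) : Fin (n+1) → ℝ))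
        = (fun w : ℝ × (ℝ × (Fin n → ℝ)) => (Fin.cons w.1 (Fmap α n w.2) : Fin (n+1) → ℝ))
          ∘ ⇑(MeasurableEquiv.prodAssoc : (ℝ × ℝ) × (Fin n → ℝ) ≃ᵐ ℝ × ℝ × (Fin n → ℝ)) from rfl]
    have hψ3m : Measurable (fun w : ℝ × (ℝ × (Fin n → ℝ)) => (Fin.cons w.1 (Fmap α n w.2) : Fin (n+1) → ℝ)) := by
      refine measurable_pi_lambda _ fun k => ?_
      induction k using Fin.cases with
      | zero => simpa using measurable_fst
      | succ j =>
        simp only [Fin.cons_succ]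
        exact (measurable_pi_apply j).comp ((measurable_Fmap α n).comp measurable_snd)
    rw [← Measure.map_map hψ3m MeasurableEquiv.prodAssoc.measurable,
      (measurePreserving_prodAssoc (betaM (a*α)) (gammaM (a+1))
        (Measure.pi fun _ : Fin n => expM)).map_eq]
    rw [show (fun w : ℝ × (ℝ × (Fin n → ℝ)) => (Fin.cons w.1 (Fmap α n w.2) : Fin (n+1) → ℝ))
        = consF ∘ (Prod.map id (Fmap α n)) from rfl]
    rw [← Measure.map_map hconsFm (measurable_id.prodMap (measurable_Fmap α n)),
      ← Measure.map_prod_map _ _ measurable_id (measurable_Fmap α n), Measure.map_id,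
      ih (a+1) (by linarith)]
    have h0 : betaM (a*α) = betaM ((a + ((0 : Fin (n+1)) : ℕ)) * α) := by
      norm_num
    have h1 : (fun j : Fin n => betaM ((a + 1 + (j : ℕ)) * α))
        = fun j : Fin n => betaM ((a + ((j.succ : Fin (n+1)) : ℕ)) * α) := by
      funext j
      congr 1
      rw [Fin.val_succ]
      push_cast
      ring
    rw [h0, h1]
    exact map_cons (fun k : Fin (n+1) => betaM ((a + (k : ℕ)) * α))

/-- **Corollary (independent Beta R's).** For `G ~ Gamma(θ/α)` independent of i.i.d.
Exp(1) variables `E₁,…,E_n`, with `G̃_k = E₁ + ⋯ + E_k` and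
`R_k = ((G + G̃_{k-1})/(G + G̃_k))^{1/α}`, the vector `(R₁,…,R_n)` has joint Lebesgue
density `∏_k (θ + (k-1)α) r_k^{θ+(k-1)α-1}` on `(0,1)^n`, i.e. the `R_k` are independent
`Beta(θ+(k-1)α, 1)` variables (indices 0-based here). -/
theorem stmt8 (α : ℝ) (hα : α ∈ Set.Ioo (0 : ℝ) 1) (θ : ℝ) (hθ : 0 < θ)
    (n : ℕ) (hn : 1 ≤ n) :
    Measure.map
        (fun p : ℝ × (Fin n → ℝ) => fun k : Fin n =>
          ((p.1 + ∑ i ∈ Finset.Iio k, p.2 i) / (p.1 + ∑ i ∈ Finset.Iic k, p.2 i)) ^ (1 / α))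
        ((gammaM (θ / α)).prod (Measure.pi fun _ : Fin n => expM))
      = (volume : Measure (Fin n → ℝ)).withDensity
          ((Set.univ.pi fun _ : Fin n => Set.Ioo (0 : ℝ) 1).indicator fun r =>
            ENNReal.ofReal
              (∏ k : Fin n, (θ + ((k : ℕ) : ℝ) * α) * r k ^ (θ + ((k : ℕ) : ℝ) * α - 1))) := by
  obtain ⟨hα0, hα1⟩ := hα
  have h := main_ind hα0 n (θ / α) (div_pos hθ hα0)
  rw [show (fun p : ℝ × (Fin n → ℝ) => fun k : Fin n =>
      ((p.1 + ∑ i ∈ Finset.Iio k, p.2 i) / (p.1 + ∑ i ∈ Finset.Iic k, p.2 i)) ^ (1 / α))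
    = Fmap α n from rfl, h]
  have hparam : (fun k : Fin n => betaM ((θ / α + (k : ℕ)) * α))
      = fun k : Fin n => (volume : Measure ℝ).withDensity
          ((Set.Ioo (0 : ℝ) 1).indicator fun r =>
            ENNReal.ofReal ((θ + (k : ℕ) * α) * r ^ (θ + (k : ℕ) * α - 1))) := by
    funext k
    rw [show (θ / α + (k : ℕ)) * α = θ + (k : ℕ) * α by field_simp, betaM]
  rw [hparam, pi_withDensity n _ (fun k => measurable_betaD _) (fun k x => indicator_ne_top x),
    ← MeasureTheory.volume_pi]
  congr 1
  funext r
  by_cases hr : r ∈ Set.univ.pi (fun _ : Fin n => Set.Ioo (0 : ℝ) 1)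
  · rw [Set.indicator_of_mem hr]
    calc ∏ k : Fin n, ((Set.Ioo (0:ℝ) 1).indicator fun x =>
          ENNReal.ofReal ((θ + (k : ℕ) * α) * x ^ (θ + (k : ℕ) * α - 1))) (r k)
        = ∏ k : Fin n, ENNReal.ofReal ((θ + (k : ℕ) * α) * r k ^ (θ + (k : ℕ) * α - 1)) :=
          Finset.prod_congr rfl fun k _ => Set.indicator_of_mem (hr k (Set.mem_univ k)) _
      _ = ENNReal.ofReal (∏ k : Fin n, (θ + (k : ℕ) * α) * r k ^ (θ + (k : ℕ) * α - 1)) := by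
          rw [ENNReal.ofReal_prod_of_nonneg]
          intro k _
          exact mul_nonneg (by positivity) (Real.rpow_nonneg (hr k (Set.mem_univ k)).1.le _)
  · rw [Set.indicator_of_notMem hr]
    obtain ⟨k, hk⟩ : ∃ k : Fin n, r k ∉ Set.Ioo (0:ℝ) 1 := by
      simpa [Set.mem_pi] using hr
    exact Finset.prod_eq_zero (Finset.mem_univ k) (Set.indicator_of_notMem hk _)
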